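/- arXiv:1607.01197 — 2 statements merged into one kernel-verified Lean document; each statement's English description precedes it below -/
import Mathlib

section
/- Let L be a lattice in E with l(L) = m ≥ 1. Then every homothety class adjacent to [L] satisfies l ∈ {m − 1, m + 1}, and there is exactly one homothety class [L'] adjacent to [L] with l(L') = m − 1. -/
/-!
`F` is a nonarchimedean local field: a field complete with respect to a discrete valuation
(encoded by `Valued F ℤᵐ⁰` together with `CompleteSpace F` and the requirement that the
valuation ring is a discrete valuation ring) with finite residue field.
`E/F` is a quadratic field extension, with `O_E` the valuation ring of `E`, realized as the
integral closure of `O_F` in `E`.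
-/

open scoped Multiplicative Pointwise WithZero

noncomputable section

variable (F : Type*) [Field F] [Valued F ℤᵐ⁰] [CompleteSpace F]

/-- The valuation ring `O_F` of `F`. -/
noncomputable abbrev OF : ValuationSubring F := (Valued.v : Valuation F ℤᵐ⁰).valuationSubring

variable (E : Type*) [Field E] [Algebra F E]

/-- A lattice in `E`: a finitely generated `O_F`-submodule of `E` containing an `F`-basis of
`E` (equivalently, spanning `E` as an `F`-vector space). -/
def IsLattice (L : Submodule (OF F) E) : Prop :=
  L.FG ∧ Submodule.span F (L : Set E) = ⊤

/-- The multiplier ring `O_L = {x ∈ E | x·L ⊆ L}` of an `O_F`-submodule `L` of `E`. -/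
def mult (L : Submodule (OF F) E) : Set E := {x : E | ∀ y ∈ L, x * y ∈ L}

/-- The order `O_F + π^m·O_E` of `E`, where `O_E` is the valuation ring (= integral closure
of `O_F`) of `E` and `π` is a uniformizer of `F`. -/
def ordSet (π : OF F) (m : ℕ) : Set E :=
  {x : E | ∃ a : OF F, ∃ b : integralClosure (OF F) E,
    x = algebraMap (OF F) E a + (algebraMap F E (π : F)) ^ m * (b : E)}

/-- Two `O_F`-submodules of `E` are homothetic if they differ by scaling by an element
of `F^*`. -/
def Homothetic (L L' : Submodule (OF F) E) : Prop :=
  ∃ c : F, c ≠ 0 ∧ (L' : Set E) = c • (L : Set E)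

/-- The homothety classes of two lattices `L`, `L'` are adjacent (as vertices of the
Bruhat–Tits tree) if they are distinct and admit representatives `M`, `M'` with
`π·M ⊊ M' ⊊ M`. -/
def Adjacent (π : OF F) (L L' : Submodule (OF F) E) : Prop :=
  ¬ Homothetic F E L L' ∧
    ∃ M M' : Submodule (OF F) E, Homothetic F E L M ∧ Homothetic F E L' M' ∧
      (algebraMap F E (π : F)) • (M : Set E) ⊂ (M' : Set E) ∧ (M' : Set E) ⊂ (M : Set E)

set_option linter.unusedSectionVars false
set_option linter.unusedVariables false
set_option maxHeartbeats 1000000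
set_option synthInstance.maxHeartbeats 100000

namespace BTaux

variable {F : Type*} [Field F] [Valued F ℤᵐ⁰] [CompleteSpace F]
variable {E : Type*} [Field E] [Algebra F E]

lemma smulOF (a : OF F) (y : E) : a • y = algebraMap F E (↑a : F) * y := by
  rw [show a • y = (↑a : F) • y from rfl, Algebra.smul_def]

instance : NoZeroSMulDivisors (OF F) E := by
  refine ⟨fun {c x} h => ?_⟩
  rw [smulOF] at h
  rcases mul_eq_zero.1 h with h2 | h2
  · left
    exact ZeroMemClass.coe_eq_zero.1
      ((map_eq_zero_iff (algebraMap F E) (algebraMap F E).injective).1 h2)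
  · right; exact h2

lemma aM_add (a b : OF F) : algebraMap F E ((↑(a + b) : F)) =
    algebraMap F E (↑a : F) + algebraMap F E (↑b : F) := by
  rw [show ((↑(a + b) : F)) = (↑a + ↑b : F) from rfl, map_add]

lemma aM_mul (a b : OF F) : algebraMap F E ((↑(a * b) : F)) =
    algebraMap F E (↑a : F) * algebraMap F E (↑b : F) := by
  rw [show ((↑(a * b) : F)) = (↑a * ↑b : F) from rfl, map_mul]

lemma aM_sub (a b : OF F) : algebraMap F E ((↑(a - b) : F)) =
    algebraMap F E (↑a : F) - algebraMap F E (↑b : F) := by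
  rw [show ((↑(a - b) : F)) = (↑a - ↑b : F) from rfl, map_sub]

lemma aM_one : algebraMap F E ((↑(1 : OF F) : F)) = 1 := by
  rw [show ((↑(1 : OF F) : F)) = (1 : F) from rfl, map_one]

lemma aM_zero : algebraMap F E ((↑(0 : OF F) : F)) = 0 := by
  rw [show ((↑(0 : OF F) : F)) = (0 : F) from rfl, map_zero]

lemma aM_neg (a : OF F) : algebraMap F E ((↑(-a) : F)) = - algebraMap F E (↑a : F) := by
  rw [show ((↑(-a) : F)) = (-(↑a) : F) from rfl, map_neg]

lemma aM_pow (a : OF F) (n : ℕ) : algebraMap F E ((↑(a ^ n) : F)) =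
    (algebraMap F E (↑a : F)) ^ n := by
  rw [show ((↑(a ^ n) : F)) = ((↑a : F) ^ n) from SubmonoidClass.coe_pow a n, map_pow]

lemma mulOF_mem {N : Submodule (OF F) E} (a : OF F) {y : E} (hy : y ∈ N) :
    algebraMap F E (↑a : F) * y ∈ N := by
  rw [← smulOF]; exact N.smul_mem a hy

lemma unit_mul_mem {N : Submodule (OF F) E} {c : OF F} (hc : IsUnit c) {x : E}
    (h : algebraMap F E (↑c : F) * x ∈ N) : x ∈ N := by
  have h2 := mulOF_mem (N := N) (↑hc.unit⁻¹ : OF F) h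
  have h3 : ((hc.unit⁻¹ : (OF F)ˣ) : OF F) * c = 1 := by
    have h := hc.unit.inv_mul
    rwa [hc.unit_spec] at h
  have h4 : ((((hc.unit⁻¹ : (OF F)ˣ) : OF F)) : F) * ((c : F)) = (1 : F) := by
    exact_mod_cast congrArg (fun z : OF F => (z : F)) h3
  have h5 : algebraMap F E ((((hc.unit⁻¹ : (OF F)ˣ) : OF F)) : F) *
      (algebraMap F E (↑c : F) * x) = x := by
    rw [← mul_assoc, ← map_mul, h4, map_one, one_mul]
  rwa [h5] at h2

lemma mem_mult {N : Submodule (OF F) E} {x : E} :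
    x ∈ mult F E N ↔ ∀ y ∈ N, x * y ∈ N := Iff.rfl

lemma mult_add_mem {N : Submodule (OF F) E} {x y : E} (hx : x ∈ mult F E N)
    (hy : y ∈ mult F E N) : x + y ∈ mult F E N := by
  intro z hz
  rw [add_mul]; exact N.add_mem (hx z hz) (hy z hz)

lemma mult_sub_mem {N : Submodule (OF F) E} {x y : E} (hx : x ∈ mult F E N)
    (hy : y ∈ mult F E N) : x - y ∈ mult F E N := by
  intro z hz
  rw [sub_mul]; exact N.sub_mem (hx z hz) (hy z hz)

lemma mult_zero_mem {N : Submodule (OF F) E} : (0 : E) ∈ mult F E N := by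
  intro z hz; rw [zero_mul]; exact N.zero_mem

lemma mult_aM_mul_mem {N : Submodule (OF F) E} (c : OF F) {x : E} (hx : x ∈ mult F E N) :
    algebraMap F E (↑c : F) * x ∈ mult F E N := by
  intro z hz
  rw [mul_assoc]
  exact mulOF_mem c (hx z hz)

lemma mult_aM_mem {N : Submodule (OF F) E} (c : OF F) :
    algebraMap F E (↑c : F) ∈ mult F E N := by
  intro z hz; exact mulOF_mem c hz

/-- `mult` is invariant under scaling the submodule by a nonzero element of `E`. -/
lemma mult_smul_eq {c : E} (hc : c ≠ 0) {N N' : Submodule (OF F) E}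
    (h : (N' : Set E) = c • (N : Set E)) : mult F E N' = mult F E N := by
  have hmem : ∀ z : E, z ∈ N' ↔ ∃ y ∈ N, c * y = z := fun z => by
    rw [← SetLike.mem_coe, h]
    simp only [Set.mem_smul_set, smul_eq_mul, SetLike.mem_coe]
  ext x
  constructor
  · intro hx y hy
    have hcy : c * y ∈ N' := (hmem _).2 ⟨y, hy, rfl⟩
    obtain ⟨z, hz, hzx⟩ := (hmem _).1 (hx _ hcy)
    have h7 : z = x * y := mul_left_cancel₀ hc (by rw [hzx]; ring)
    rwa [← h7]
  · intro hx y hy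
    obtain ⟨z, hz, rfl⟩ := (hmem _).1 hy
    exact (hmem _).2 ⟨x * z, hx z hz, by ring⟩

lemma smul_set_algebraMap (c : F) (s : Set E) :
    c • s = (algebraMap F E c) • s := by
  ext x
  simp only [Set.mem_smul_set]
  constructor
  · rintro ⟨y, hy, rfl⟩
    exact ⟨y, hy, by rw [smul_eq_mul, Algebra.smul_def]⟩
  · rintro ⟨y, hy, rfl⟩
    exact ⟨y, hy, by rw [smul_eq_mul, Algebra.smul_def]⟩

lemma homothetic_mult_eq {N N' : Submodule (OF F) E} (h : Homothetic F E N N') :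
    mult F E N' = mult F E N := by
  obtain ⟨c, hc, hset⟩ := h
  rw [smul_set_algebraMap] at hset
  exact mult_smul_eq (by
    simpa using (map_ne_zero_iff (algebraMap F E) (algebraMap F E).injective).2 hc) hset

lemma homothetic_refl (N : Submodule (OF F) E) : Homothetic F E N N :=
  ⟨1, one_ne_zero, by rw [one_smul]⟩

lemma homothetic_symm {N N' : Submodule (OF F) E} (h : Homothetic F E N N') :
    Homothetic F E N' N := by
  obtain ⟨c, hc, hset⟩ := h
  refine ⟨c⁻¹, inv_ne_zero hc, ?_⟩
  rw [hset, smul_smul, inv_mul_cancel₀ hc, one_smul]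

lemma homothetic_trans {N N' N'' : Submodule (OF F) E} (h : Homothetic F E N N')
    (h' : Homothetic F E N' N'') : Homothetic F E N N'' := by
  obtain ⟨c, hc, hset⟩ := h
  obtain ⟨c', hc', hset'⟩ := h'
  exact ⟨c' * c, mul_ne_zero hc' hc, by rw [hset', hset, smul_smul]⟩

lemma aM_mem_integralClosure (a : OF F) :
    algebraMap F E (↑a : F) ∈ integralClosure (OF F) E := by
  rw [show algebraMap F E (↑a : F) = algebraMap (OF F) E a from
    (IsScalarTower.algebraMap_apply (OF F) F E a).symm]
  exact Subalgebra.algebraMap_mem _ a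

lemma fg_of_le [IsDiscreteValuationRing (OF F)] {A B : Submodule (OF F) E} (hAB : A ≤ B)
    (hB : B.FG) : A.FG := by
  haveI : IsNoetherian (OF F) ↥B := isNoetherian_of_fg_of_noetherian B hB
  have h1 : (A.comap B.subtype).FG := IsNoetherian.noetherian _
  have h2 : (A.comap B.subtype).map B.subtype = A := by
    rw [Submodule.map_comap_subtype]
    exact inf_eq_right.2 hAB
  rw [← h2]; exact h1.map _

lemma dvd_of_not_unit [IsDiscreteValuationRing (OF F)] {π : OF F} (hπ : Irreducible π)
    {c : OF F} (hc : ¬IsUnit c) : π ∣ c := by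
  have h1 : c ∈ IsLocalRing.maximalIdeal (OF F) :=
    (IsLocalRing.mem_maximalIdeal c).2 (mem_nonunits_iff.2 hc)
  rw [hπ.maximalIdeal_eq] at h1
  exact Ideal.mem_span_singleton.1 h1

lemma pairBasis [IsDiscreteValuationRing (OF F)] (hquad : Module.finrank F E = 2)
    (L : Submodule (OF F) E) (hFG : L.FG) (hspan : Submodule.span F (L : Set E) = ⊤) :
    ∃ e₁ e₂ : E, e₁ ∈ L ∧ e₂ ∈ L ∧
      (∀ a b : F, algebraMap F E a * e₁ + algebraMap F E b * e₂ = 0 → a = 0 ∧ b = 0) ∧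
      (∀ x ∈ L, ∃ a b : OF F,
        x = algebraMap F E (↑a : F) * e₁ + algebraMap F E (↑b : F) * e₂) := by
  haveI : Module.Finite (OF F) ↥L := Module.Finite.iff_fg.2 hFG
  haveI : NoZeroSMulDivisors (OF F) ↥L := by
    refine ⟨fun {c x} h => ?_⟩
    have h1 : c • (x : E) = 0 := by
      have h0 := congrArg (fun z : ↥L => (z : E)) h
      simpa using h0
    rw [smulOF] at h1
    rcases mul_eq_zero.1 h1 with h2 | h2
    · left
      have h3 : (c : F) = 0 :=
        (map_eq_zero_iff (algebraMap F E) (algebraMap F E).injective).1 h2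
      exact ZeroMemClass.coe_eq_zero.1 h3
    · right
      exact Subtype.ext h2
  obtain ⟨n, b⟩ := Module.basisOfFiniteTypeTorsionFree' (R := OF F) (M := ↥L)
  set w : Fin n → E := fun i => ((b i : ↥L) : E) with hw
  have hwind : LinearIndependent (OF F) w := by
    have h := b.linearIndependent.map' L.subtype (Submodule.ker_subtype L)
    exact h
  have hwF : LinearIndependent F w := (LinearIndependent.iff_fractionRing (OF F) F).1 hwind
  have hcoords : ∀ x ∈ L, ∃ cf : Fin n → OF F, x = ∑ i, (cf i) • w i := by
    intro x hx
    refine ⟨fun i => b.repr ⟨x, hx⟩ i, ?_⟩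
    have h0 := congrArg (fun z : ↥L => (z : E)) (b.sum_repr ⟨x, hx⟩)
    simp only at h0
    refine h0.symm.trans ?_
    rw [show ((∑ i, b.repr ⟨x, hx⟩ i • b i : ↥L) : E)
        = L.subtype (∑ i, b.repr ⟨x, hx⟩ i • b i) from rfl, map_sum]
    simp [hw]
  have hsp : Submodule.span F (Set.range w) = ⊤ := by
    rw [eq_top_iff, ← hspan, Submodule.span_le]
    intro x hx
    obtain ⟨c, hc⟩ := hcoords x hx
    rw [hc]
    refine Submodule.sum_mem _ fun i _ => ?_
    rw [show (c i) • w i = ((c i : F)) • w i from rfl]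
    exact Submodule.smul_mem _ _ (Submodule.subset_span ⟨i, rfl⟩)
  let bF : Module.Basis (Fin n) F E := Module.Basis.mk hwF (by rw [hsp])
  have hn : n = 2 := by
    have h := Module.finrank_eq_card_basis bF
    rw [hquad] at h
    simpa using h.symm
  subst hn
  refine ⟨w 0, w 1, (b 0).2, (b 1).2, ?_, ?_⟩
  · intro a b' hab
    have h := Fintype.linearIndependent_iff.1 hwF ![a, b'] ?_
    · exact ⟨h 0, h 1⟩
    · rw [Fin.sum_univ_two]
      simpa [Algebra.smul_def] using hab
  · intro x hx
    obtain ⟨c, hc⟩ := hcoords x hx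
    exact ⟨c 0, c 1, by rw [hc, Fin.sum_univ_two, smulOF, smulOF]⟩

lemma omega_core (π : OF F) (hπ : Irreducible π) {e₁ e₂ : E}
    (he₂ : e₂ ∈ integralClosure (OF F) E)
    (hind : ∀ a b : F, algebraMap F E a * e₁ + algebraMap F E b * e₂ = 0 → a = 0 ∧ b = 0)
    (hcoords : ∀ x ∈ integralClosure (OF F) E, ∃ a b : OF F,
      x = algebraMap F E (↑a : F) * e₁ + algebraMap F E (↑b : F) * e₂)
    {α β : OF F} (hα : IsUnit α)
    (h1 : (1 : E) = algebraMap F E (↑α : F) * e₁ + algebraMap F E (↑β : F) * e₂) :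
    ∃ ω : E, ω ∈ integralClosure (OF F) E ∧
      (∀ a b : F, algebraMap F E a + algebraMap F E b * ω = 0 → a = 0 ∧ b = 0) ∧
      (∀ x : E, x ∈ integralClosure (OF F) E ↔
        ∃ a b : OF F, x = algebraMap F E (↑a : F) + algebraMap F E (↑b : F) * ω) := by
  set γ : OF F := ((hα.unit⁻¹ : (OF F)ˣ) : OF F) with hγ
  have hγα : (↑γ : F) * (↑α : F) = 1 := by
    have h := hα.unit.inv_mul
    rw [hα.unit_spec] at h
    exact_mod_cast congrArg (fun z : OF F => (z : F)) h
  have hγα' : algebraMap F E (↑γ : F) * algebraMap F E (↑α : F) = 1 := by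
    rw [← map_mul, hγα, map_one]
  have he₁' : algebraMap F E (↑α : F) * e₁ = 1 - algebraMap F E (↑β : F) * e₂ := by
    rw [h1]; ring
  have he₁'' : e₁ = algebraMap F E (↑γ : F) * (1 - algebraMap F E (↑β : F) * e₂) := by
    rw [← he₁', ← mul_assoc, hγα', one_mul]
  have hα0 : (↑α : F) ≠ 0 := by
    intro h0
    exact hα.ne_zero (by exact_mod_cast h0)
  refine ⟨e₂, he₂, ?_, ?_⟩
  · intro a b hab
    have h2 : algebraMap F E (a * ↑α) * e₁ + algebraMap F E (a * ↑β + b) * e₂ = 0 := by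
      rw [map_mul, map_add, map_mul]
      linear_combination hab - (algebraMap F E a) * h1
    obtain ⟨h3, h4⟩ := hind _ _ h2
    have ha : a = 0 := by
      rcases mul_eq_zero.1 h3 with h | h
      · exact h
      · exact absurd h hα0
    refine ⟨ha, ?_⟩
    rw [ha] at h4
    simpa using h4
  · intro x
    constructor
    · intro hx
      obtain ⟨a, b, hab⟩ := hcoords x hx
      refine ⟨a * γ, b - a * γ * β, ?_⟩
      rw [aM_mul, aM_sub, aM_mul, aM_mul]
      rw [hab, he₁'']
      ring
    · rintro ⟨a, b, rfl⟩
      exact add_mem (aM_mem_integralClosure a)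
        (mul_mem (aM_mem_integralClosure b) he₂)

lemma exists_omega [IsDiscreteValuationRing (OF F)] (π : OF F) (hπ : Irreducible π)
    (hquad : Module.finrank F E = 2)
    (hfg : (Subalgebra.toSubmodule (integralClosure (OF F) E)).FG)
    (hspan : Submodule.span F ((integralClosure (OF F) E : Set E)) = ⊤) :
    ∃ ω : E, ω ∈ integralClosure (OF F) E ∧
      (∀ a b : F, algebraMap F E a + algebraMap F E b * ω = 0 → a = 0 ∧ b = 0) ∧
      (∀ x : E, x ∈ integralClosure (OF F) E ↔
        ∃ a b : OF F, x = algebraMap F E (↑a : F) + algebraMap F E (↑b : F) * ω) := by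
  obtain ⟨e₁, e₂, he₁, he₂, hind, hcoords⟩ :=
    pairBasis hquad (Subalgebra.toSubmodule (integralClosure (OF F) E)) hfg hspan
  rw [Subalgebra.mem_toSubmodule] at he₁ he₂
  have hcoords' : ∀ x ∈ integralClosure (OF F) E, ∃ a b : OF F,
      x = algebraMap F E (↑a : F) * e₁ + algebraMap F E (↑b : F) * e₂ := by
    intro x hx
    exact hcoords x (by rwa [Subalgebra.mem_toSubmodule])
  obtain ⟨α, β, h1⟩ := hcoords' 1 (one_mem _)
  by_cases hα : IsUnit α
  · exact omega_core π hπ he₂ hind hcoords' hα h1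
  by_cases hβ : IsUnit β
  · have hind2 : ∀ a b : F, algebraMap F E a * e₂ + algebraMap F E b * e₁ = 0 →
        a = 0 ∧ b = 0 := by
      intro a b hab
      obtain ⟨h2, h3⟩ := hind b a (by linear_combination hab)
      exact ⟨h3, h2⟩
    have hcoords2 : ∀ x ∈ integralClosure (OF F) E, ∃ a b : OF F,
        x = algebraMap F E (↑a : F) * e₂ + algebraMap F E (↑b : F) * e₁ := by
      intro x hx
      obtain ⟨a, b, hab⟩ := hcoords' x hx
      exact ⟨b, a, by rw [hab]; ring⟩
    have h1' : (1 : E) = algebraMap F E (↑β : F) * e₂ + algebraMap F E (↑α : F) * e₁ := by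
      rw [h1]; ring
    exact omega_core π hπ he₁ hind2 hcoords2 hβ h1'
  · exfalso
    obtain ⟨α', hα'⟩ := dvd_of_not_unit hπ hα
    obtain ⟨β', hβ'⟩ := dvd_of_not_unit hπ hβ
    have hπ0 : (↑π : F) ≠ 0 := fun h => hπ.ne_zero (by exact_mod_cast h)
    set z := algebraMap F E (↑α' : F) * e₁ + algebraMap F E (↑β' : F) * e₂ with hz
    have hzT : z ∈ integralClosure (OF F) E := by
      exact add_mem (mul_mem (aM_mem_integralClosure α') he₁)
        (mul_mem (aM_mem_integralClosure β') he₂)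
    have h2 : algebraMap F E (↑π : F) * z = 1 := by
      rw [h1, hα', hβ', hz, aM_mul, aM_mul]
      ring
    have hz' : z = algebraMap F E ((↑π : F)⁻¹) := by
      rw [map_inv₀]
      exact eq_inv_of_mul_eq_one_right h2
    have hint : IsIntegral (OF F) ((↑π : F)⁻¹) := by
      have h3 : IsIntegral (OF F) z := hzT
      rw [hz'] at h3
      have hcoe : ⇑(IsScalarTower.toAlgHom (OF F) F E) = ⇑(algebraMap F E) := rfl
      refine (isIntegral_algHom_iff (IsScalarTower.toAlgHom (OF F) F E) ?_).1 ?_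
      · rw [hcoe]; exact (algebraMap F E).injective
      · exact h3
    obtain ⟨y, hy⟩ := IsIntegrallyClosed.isIntegral_iff.1 hint
    have h5 : ((π * y : OF F) : F) = 1 := by
      rw [show ((π * y : OF F) : F) = (↑π : F) * (↑y : F) from rfl,
        show ((y : OF F) : F) = (↑π : F)⁻¹ from hy, mul_inv_cancel₀ hπ0]
    exact hπ.not_isUnit (IsUnit.of_mul_eq_one (a := π) y (by exact_mod_cast h5))

lemma ordSet_iff (π : OF F) {ω : E} (hωT : ω ∈ integralClosure (OF F) E)
    (hT : ∀ x : E, x ∈ integralClosure (OF F) E ↔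
      ∃ a b : OF F, x = algebraMap F E (↑a : F) + algebraMap F E (↑b : F) * ω)
    (j : ℕ) (x : E) :
    x ∈ ordSet F E π j ↔ ∃ a b : OF F,
      x = algebraMap F E (↑a : F) +
        algebraMap F E (↑b : F) * ((algebraMap F E (↑π : F)) ^ j * ω) := by
  constructor
  · rintro ⟨a, b, rfl⟩
    obtain ⟨c, d, hcd⟩ := (hT b).1 b.2
    refine ⟨a + c * π ^ j, d, ?_⟩
    rw [aM_add, aM_mul, aM_pow]
    rw [show algebraMap (OF F) E a = algebraMap F E (↑a : F) from
      (IsScalarTower.algebraMap_apply (OF F) F E a), hcd]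
    ring
  · rintro ⟨a, b, rfl⟩
    refine ⟨a, ⟨algebraMap F E (↑b : F) * ω, mul_mem (aM_mem_integralClosure b) hωT⟩, ?_⟩
    rw [show algebraMap (OF F) E a = algebraMap F E (↑a : F) from
      (IsScalarTower.algebraMap_apply (OF F) F E a)]
    ring

lemma pio_mem (π : OF F) (hπ : Irreducible π) {ω : E}
    (hωT : ω ∈ integralClosure (OF F) E)
    (hT : ∀ x : E, x ∈ integralClosure (OF F) E ↔
      ∃ a b : OF F, x = algebraMap F E (↑a : F) + algebraMap F E (↑b : F) * ω)
    (hind : ∀ a b : F, algebraMap F E a + algebraMap F E b * ω = 0 → a = 0 ∧ b = 0)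
    (i j : ℕ) :
    (algebraMap F E (↑π : F)) ^ i * ω ∈ ordSet F E π j ↔ j ≤ i := by
  have hπ0 : (↑π : F) ≠ 0 := fun h0 => hπ.ne_zero (by exact_mod_cast h0)
  rw [ordSet_iff π hωT hT j]
  constructor
  · rintro ⟨a, b, h⟩
    by_contra hji
    push_neg at hji
    have h2 : (↑a : F) = 0 ∧ (↑b : F) * (↑π : F) ^ j - (↑π : F) ^ i = 0 := by
      apply hind
      rw [map_sub, map_mul, map_pow, map_pow]
      linear_combination -h
    have h3 : (↑b : F) * (↑π : F) ^ (j - i) = 1 := by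
      have h4 := h2.2
      have h6 : ((↑b : F) * (↑π : F) ^ (j - i)) * (↑π : F) ^ i = 1 * (↑π : F) ^ i := by
        rw [one_mul, mul_assoc, ← pow_add, show j - i + i = j by omega]
        linear_combination h4
      exact mul_right_cancel₀ (pow_ne_zero _ hπ0) h6
    obtain ⟨d, hd⟩ : ∃ d, j - i = d + 1 := ⟨j - i - 1, by omega⟩
    have h7 : ((π * (b * π ^ d) : OF F) : F) = 1 := by
      rw [show ((π * (b * π ^ d) : OF F) : F)
          = (↑π : F) * ((↑b : F) * (↑π : F) ^ d) from by push_cast; ring]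
      rw [← h3, hd, pow_succ]
      ring
    exact absurd (IsUnit.of_mul_eq_one (a := π) _ (by exact_mod_cast h7)) hπ.not_isUnit
  · intro hji
    refine ⟨0, π ^ (i - j), ?_⟩
    rw [aM_zero, aM_pow, ← mul_assoc, ← pow_add, show i - j + j = i by omega, zero_add]

lemma ordSet_inj (π : OF F) (hπ : Irreducible π) {ω : E}
    (hωT : ω ∈ integralClosure (OF F) E)
    (hT : ∀ x : E, x ∈ integralClosure (OF F) E ↔
      ∃ a b : OF F, x = algebraMap F E (↑a : F) + algebraMap F E (↑b : F) * ω)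
    (hind : ∀ a b : F, algebraMap F E a + algebraMap F E b * ω = 0 → a = 0 ∧ b = 0)
    {j j' : ℕ} (h : ordSet F E π j = ordSet F E π j') : j = j' := by
  have h1 : (algebraMap F E (↑π : F)) ^ j * ω ∈ ordSet F E π j :=
    (pio_mem π hπ hωT hT hind j j).2 le_rfl
  have h2 : (algebraMap F E (↑π : F)) ^ j' * ω ∈ ordSet F E π j' :=
    (pio_mem π hπ hωT hT hind j' j').2 le_rfl
  rw [h] at h1
  rw [← h] at h2
  exact le_antisymm ((pio_mem π hπ hωT hT hind j' j).1 h2)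
    ((pio_mem π hπ hωT hT hind j j').1 h1)

lemma mult_classify [IsDiscreteValuationRing (OF F)] (π : OF F) (hπ : Irreducible π) {ω : E}
    (hωT : ω ∈ integralClosure (OF F) E)
    (hT : ∀ x : E, x ∈ integralClosure (OF F) E ↔
      ∃ a b : OF F, x = algebraMap F E (↑a : F) + algebraMap F E (↑b : F) * ω)
    {N : Submodule (OF F) E} (hFG : N.FG) (hN0 : N ≠ ⊥)
    {i : ℕ} (hi : (algebraMap F E (↑π : F)) ^ i * ω ∈ mult F E N) :
    ∃ j, j ≤ i ∧ mult F E N = ordSet F E π j := by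
  have hint : ∀ x ∈ mult F E N, x ∈ integralClosure (OF F) E := by
    intro x hx
    exact isIntegral_of_smul_mem_submodule N hN0 hFG x fun n hn => by
      rw [smul_eq_mul]; exact hx n hn
  let J : Ideal (OF F) :=
    { carrier := {b : OF F | algebraMap F E (↑b : F) * ω ∈ mult F E N}
      add_mem' := fun {a b} ha hb => by
        simp only [Set.mem_setOf_eq] at *
        rw [aM_add, add_mul]
        exact mult_add_mem ha hb
      zero_mem' := by
        simp only [Set.mem_setOf_eq, aM_zero, zero_mul]
        exact mult_zero_mem
      smul_mem' := fun c b hb => by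
        simp only [Set.mem_setOf_eq, smul_eq_mul] at *
        rw [aM_mul, mul_assoc]
        exact mult_aM_mul_mem c hb }
  have hπiJ : π ^ i ∈ J := by
    show algebraMap F E ((↑(π ^ i) : F)) * ω ∈ mult F E N
    rw [aM_pow]; exact hi
  haveI := IsPrincipalIdealRing.principal J
  set g := Submodule.IsPrincipal.generator J with hgdef
  have hg : Ideal.span {g} = J := Submodule.IsPrincipal.span_singleton_generator J
  have hg0 : g ≠ 0 := by
    intro h0
    have h1 : π ^ i ∈ Ideal.span ({g} : Set (OF F)) := by rw [hg]; exact hπiJ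
    rw [h0, Ideal.span_singleton_eq_bot.2 rfl, Ideal.mem_bot] at h1
    rcases Nat.eq_zero_or_pos i with hi0 | hi0
    · rw [hi0, pow_zero] at h1; exact one_ne_zero h1
    · exact hπ.ne_zero ((pow_eq_zero_iff hi0.ne').1 h1)
  obtain ⟨n, u, hgu⟩ := IsDiscreteValuationRing.eq_unit_mul_pow_irreducible hg0 hπ
  have hJ : J = Ideal.span {π ^ n} := by
    have hassoc : Associated (π ^ n) g := ⟨u, by rw [hgu]; ring⟩
    have heq := Ideal.span_singleton_eq_span_singleton.2 hassoc
    rw [← hg, ← heq]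
  have hπnJ : π ^ n ∈ J := by rw [hJ]; exact Ideal.subset_span rfl
  have hjle : n ≤ i := by
    have h8 : π ^ n ∣ π ^ i := by
      have h9 := hπiJ
      rw [hJ] at h9
      exact Ideal.mem_span_singleton.1 h9
    by_contra hni
    push_neg at hni
    obtain ⟨c, hc⟩ := h8
    obtain ⟨d, hd⟩ : ∃ d, n - i = d + 1 := ⟨n - i - 1, by omega⟩
    have h9 : (1 : OF F) = π ^ (n - i) * c := by
      have h10 : π ^ i * 1 = π ^ i * (π ^ (n - i) * c) := by
        rw [mul_one, ← mul_assoc, ← pow_add, show i + (n - i) = n by omega, ← hc]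
      exact mul_left_cancel₀ (pow_ne_zero _ hπ.ne_zero) h10
    refine hπ.not_isUnit (IsUnit.of_mul_eq_one (a := π) (π ^ d * c) ?_)
    rw [← mul_assoc, show π * π ^ d = π ^ (n - i) from by rw [hd, pow_succ]; ring]
    exact h9.symm
  refine ⟨n, hjle, ?_⟩
  ext x
  rw [ordSet_iff π hωT hT n]
  constructor
  · intro hx
    obtain ⟨a, b, hab⟩ := (hT x).1 (hint x hx)
    have hbJ : b ∈ J := by
      show algebraMap F E (↑b : F) * ω ∈ mult F E N
      have h12 : algebraMap F E (↑b : F) * ω = x - algebraMap F E (↑a : F) := by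
        rw [hab]; ring
      rw [h12]
      exact mult_sub_mem hx (mult_aM_mem a)
    rw [hJ] at hbJ
    obtain ⟨c, hc⟩ := Ideal.mem_span_singleton.1 hbJ
    refine ⟨a, c, ?_⟩
    rw [hab, hc, aM_mul, aM_pow]
    ring
  · rintro ⟨a, b, rfl⟩
    have h14 : algebraMap F E ((↑(π ^ n) : F)) * ω ∈ mult F E N := hπnJ
    rw [aM_pow] at h14
    exact mult_add_mem (mult_aM_mem a) (mult_aM_mul_mem b h14)



def mulMap (K : Type*) [Field K] [Valued K ℤᵐ⁰] [CompleteSpace K] {W : Type*} [Field W] [Algebra K W]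
    (c : W) : W →ₗ[OF K] W where
  toFun x := c * x
  map_add' := mul_add c
  map_smul' r x := by
    simp only [RingHom.id_apply]
    rw [smulOF, smulOF]
    ring

lemma mulMap_coe (c : E) (N : Submodule (OF F) E) :
    (((N.map (mulMap F c)) : Submodule (OF F) E) : Set E) = c • (N : Set E) := by
  ext x
  simp only [Submodule.map_coe, Set.mem_image, Set.mem_smul_set, SetLike.mem_coe]
  constructor
  · rintro ⟨y, hy, rfl⟩
    exact ⟨y, hy, by rw [smul_eq_mul]; rfl⟩
  · rintro ⟨y, hy, rfl⟩
    exact ⟨y, hy, by rw [smul_eq_mul]; rfl⟩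

lemma exists_between {π : OF F} {L L' : Submodule (OF F) E} (hadj : Adjacent F E π L L')
    (hFG : L'.FG) :
    ∃ N : Submodule (OF F) E, N.FG ∧ Homothetic F E L' N ∧
      (∀ x ∈ L, algebraMap F E (↑π : F) * x ∈ N) ∧ N ≤ L ∧
      (∃ x ∈ N, x ∉ (algebraMap F E (↑π : F)) • (L : Set E)) ∧ ¬ L ≤ N := by
  obtain ⟨-, M, M', ⟨c, hc0, hMset⟩, hM', hss1, hss2⟩ := hadj
  set pE : E := algebraMap F E (↑π : F) with hpE
  set cE : E := algebraMap F E c with hcE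
  have hcE0 : cE ≠ 0 := by
    rw [hcE]
    exact (map_ne_zero_iff _ (algebraMap F E).injective).2 hc0
  have hMset' : (M : Set E) = cE • (L : Set E) := by rw [hMset, smul_set_algebraMap]
  have hMiff : ∀ x : E, x ∈ M ↔ ∃ z ∈ L, cE * z = x := fun x => by
    rw [← SetLike.mem_coe, hMset']
    simp only [Set.mem_smul_set, smul_eq_mul, SetLike.mem_coe]
  obtain ⟨c', hc'0, hM'set⟩ := hM'
  have hM'eq : M' = L'.map (mulMap F (algebraMap F E c')) := by
    apply SetLike.coe_injective
    rw [mulMap_coe, ← smul_set_algebraMap]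
    exact hM'set
  have hM'FG : M'.FG := by rw [hM'eq]; exact hFG.map _
  set N : Submodule (OF F) E := M'.map (mulMap F cE⁻¹) with hN
  have hNmem : ∀ x : E, x ∈ N ↔ ∃ y ∈ M', cE⁻¹ * y = x := fun x => by
    rw [hN, Submodule.mem_map]
    rfl
  have hsub1 : pE • (M : Set E) ⊆ (M' : Set E) := hss1.subset
  have hsub2 : (M' : Set E) ⊆ (M : Set E) := hss2.subset
  have hNset : (N : Set E) = cE⁻¹ • (M' : Set E) := by
    rw [hN]
    exact mulMap_coe (F := F) cE⁻¹ M'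
  refine ⟨N, hM'FG.map _, ?_, ?_, ?_, ?_, ?_⟩
  · -- Homothetic L' N
    refine homothetic_trans ⟨c', hc'0, hM'set⟩ ⟨c⁻¹, inv_ne_zero hc0, ?_⟩
    rw [hNset, smul_set_algebraMap c⁻¹ ((M' : Set E)), map_inv₀, hcE]
  · -- lower bound
    intro x hx
    have h1 : cE * x ∈ M := (hMiff _).2 ⟨x, hx, rfl⟩
    have h2 : pE * (cE * x) ∈ (M' : Set E) := by
      have h3 : pE • (cE * x) ∈ pE • (M : Set E) :=
        Set.smul_mem_smul_set (by exact h1)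
      rw [smul_eq_mul] at h3
      exact hsub1 h3
    refine (hNmem _).2 ⟨pE * (cE * x), h2, ?_⟩
    field_simp
  · -- N ≤ L
    intro x hx
    obtain ⟨y, hy, rfl⟩ := (hNmem _).1 hx
    obtain ⟨z, hz, hcz⟩ := (hMiff y).1 (hsub2 hy)
    have : cE⁻¹ * y = z := by rw [← hcz]; field_simp
    rwa [this]
  · -- existence of element not in pE • L
    obtain ⟨y, hyM', hynot⟩ := Set.exists_of_ssubset hss1
    refine ⟨cE⁻¹ * y, (hNmem _).2 ⟨y, hyM', rfl⟩, ?_⟩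
    intro hmem
    obtain ⟨u, huL, hu⟩ := Set.mem_smul_set.1 hmem
    rw [smul_eq_mul] at hu
    apply hynot
    have h4 : pE • (cE * u) ∈ pE • (M : Set E) :=
      Set.smul_mem_smul_set (by exact (hMiff _).2 ⟨u, huL, rfl⟩)
    have h5 : pE • (cE * u) = y := by
      rw [smul_eq_mul]
      have h6 : cE * (pE * u) = y := by rw [hu]; field_simp
      linear_combination h6
    rwa [h5] at h4
  · -- ¬ L ≤ N
    intro hLN
    obtain ⟨z, hzM, hznot⟩ := Set.exists_of_ssubset hss2
    obtain ⟨u, huL, hcu⟩ := (hMiff z).1 hzM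
    obtain ⟨y', hy', hy'eq⟩ := (hNmem u).1 (hLN huL)
    apply hznot
    have : z = y' := by
      rw [← hcu, ← hy'eq]
      field_simp
    rwa [this]

end BTaux

open BTaux in
/-- Let `L` be a lattice in `E` with `l(L) = m ≥ 1`, i.e. with multiplier ring
`O_L = O_F + π^m·O_E`. Then every homothety class adjacent to `[L]` has `l ∈ {m-1, m+1}`,
and there is exactly one homothety class adjacent to `[L]` with `l = m - 1`. -/
theorem adjacent_classes_of_lattice_with_positive_conductor
    [IsDiscreteValuationRing (OF F)] [Finite (IsLocalRing.ResidueField (OF F))]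
    (π : OF F) (hπ : Irreducible π)
    (hquad : Module.finrank F E = 2)
    (L : Submodule (OF F) E) (hL : IsLattice F E L)
    (m : ℕ) (hm : 1 ≤ m) (hLm : mult F E L = ordSet F E π m) :
    (∀ L' : Submodule (OF F) E, IsLattice F E L' → Adjacent F E π L L' →
        ∀ m' : ℕ, mult F E L' = ordSet F E π m' → m' = m - 1 ∨ m' = m + 1) ∧
    (∃ L' : Submodule (OF F) E, IsLattice F E L' ∧ Adjacent F E π L L' ∧
        mult F E L' = ordSet F E π (m - 1) ∧
        ∀ L'' : Submodule (OF F) E, IsLattice F E L'' → Adjacent F E π L L'' →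
          mult F E L'' = ordSet F E π (m - 1) → Homothetic F E L' L'') := by
  classical
  obtain ⟨k, rfl⟩ : ∃ k, m = k + 1 := ⟨m - 1, by omega⟩
  clear hm
  set p : E := algebraMap F E (↑π : F) with hp_def
  have hπ0F : (↑π : F) ≠ 0 := fun h0 => hπ.ne_zero (by exact_mod_cast h0)
  have hp0 : p ≠ 0 := by
    rw [hp_def]
    exact (map_ne_zero_iff _ (algebraMap F E).injective).2 hπ0F
  -- a nonzero element of L
  obtain ⟨y₀, hy₀L, hy₀0⟩ : ∃ y ∈ L, y ≠ (0 : E) := by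
    by_contra hno
    push_neg at hno
    have hsub : (L : Set E) ⊆ {0} := fun z hz => hno z hz
    have h1 : Submodule.span F (L : Set E) ≤ Submodule.span F ({0} : Set E) :=
      Submodule.span_mono hsub
    rw [hL.2, Submodule.span_zero_singleton] at h1
    exact one_ne_zero ((Submodule.mem_bot F).1 (h1 Submodule.mem_top))
  -- span of the integral closure
  haveI : Module.Finite F E := Module.finite_of_finrank_pos (by rw [hquad]; norm_num)
  haveI : Algebra.IsAlgebraic F E := Algebra.IsAlgebraic.of_finite F E
  have hTspan : Submodule.span F ((integralClosure (OF F) E : Set E)) = ⊤ := by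
    rw [eq_top_iff]
    intro x _
    have halg : IsAlgebraic (OF F) x :=
      (IsFractionRing.isAlgebraic_iff (OF F) F E).2 (Algebra.IsAlgebraic.isAlgebraic x)
    obtain ⟨xc, d, hd0, hdx⟩ : ∃ (xc : integralClosure (OF F) E) (d : OF F),
        d ≠ 0 ∧ d • x = ↑xc := by
      obtain ⟨d, hd0, hint⟩ := halg.exists_integral_multiple
      exact ⟨⟨_, hint⟩, d, hd0, rfl⟩
    have hdx2 : algebraMap F E ((d : OF F) : F) * x = ↑xc := by rw [← smulOF]; exact hdx
    have hd0F : ((d : OF F) : F) ≠ 0 := fun h => hd0 (ZeroMemClass.coe_eq_zero.1 h)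
    have hDE : algebraMap F E ((d : OF F) : F) ≠ 0 :=
      (map_ne_zero_iff _ (algebraMap F E).injective).2 hd0F
    have hxeq : x = (((d : OF F) : F))⁻¹ • ((xc : E)) := by
      rw [Algebra.smul_def, map_inv₀, ← hdx2, ← mul_assoc, inv_mul_cancel₀ hDE, one_mul]
    rw [hxeq]
    exact Submodule.smul_mem _ _ (Submodule.subset_span xc.2)
  -- the integral closure is a finitely generated module
  have hTfg : (Subalgebra.toSubmodule (integralClosure (OF F) E)).FG := by
    have hle : Subalgebra.toSubmodule (integralClosure (OF F) E) ≤
        Submodule.map (mulMap F (y₀⁻¹ * (p ^ (k+1))⁻¹)) L := by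
      intro x hx
      rw [Subalgebra.mem_toSubmodule] at hx
      have h1 : p ^ (k+1) * x ∈ mult F E L := by
        rw [hLm]
        exact ⟨0, ⟨x, hx⟩, by rw [map_zero, zero_add, hp_def]⟩
      refine Submodule.mem_map.2 ⟨(p ^ (k+1) * x) * y₀, h1 y₀ hy₀L, ?_⟩
      show (y₀⁻¹ * (p ^ (k+1))⁻¹) * ((p ^ (k+1) * x) * y₀) = x
      have hpk : p ^ (k+1) ≠ 0 := pow_ne_zero _ hp0
      field_simp
    exact fg_of_le hle (hL.1.map _)
  obtain ⟨ω, hωT, hind, hT⟩ := exists_omega π hπ hquad hTfg hTspan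
  obtain ⟨s, t, hst⟩ := (hT (ω * ω)).1 (mul_mem hωT hωT)
  have hpio : ∀ i j : ℕ, (p ^ i * ω ∈ ordSet F E π j ↔ j ≤ i) := fun i j =>
    pio_mem π hπ hωT hT hind i j
  have hordinj : ∀ {j j' : ℕ}, ordSet F E π j = ordSet F E π j' → j = j' :=
    fun {j j'} h => ordSet_inj π hπ hωT hT hind h
  have hmem_multL : p ^ (k+1) * ω ∈ mult F E L := by
    rw [hLm]; exact (hpio (k+1) (k+1)).2 le_rfl
  have hnot_multL : ¬ (p ^ k * ω ∈ mult F E L) := by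
    rw [hLm]
    intro h
    have := (hpio k (k+1)).1 h
    omega
  obtain ⟨v, hvL, hv⟩ : ∃ v ∈ L, ¬ ((p ^ k * ω) * v ∈ L) := by
    by_contra hcon
    push_neg at hcon
    exact hnot_multL fun y hy => hcon y hy
  have hv0 : v ≠ 0 := fun h => hv (by rw [h, mul_zero]; exact L.zero_mem)
  set w : E := (p ^ (k+1) * ω) * v with hw_def
  have hwL : w ∈ L := hmem_multL v hvL
  have hω0 : ω ≠ 0 := by
    intro h
    obtain ⟨-, h1⟩ := hind 0 1 (by rw [h, map_zero, map_one]; ring)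
    exact one_ne_zero h1
  have hw0 : w ≠ 0 := by
    rw [hw_def]
    exact mul_ne_zero (mul_ne_zero (pow_ne_zero _ hp0) hω0) hv0
  have hvind : ∀ a b : F, algebraMap F E a * v + algebraMap F E b * w = 0 →
      a = 0 ∧ b = 0 := by
    intro a b hab
    rw [hw_def] at hab
    have h1 : (algebraMap F E a + algebraMap F E (b * (↑π : F)^(k+1)) * ω) * v = 0 := by
      rw [map_mul, map_pow, ← hp_def]
      linear_combination hab
    rcases mul_eq_zero.1 h1 with h2 | h2
    · obtain ⟨ha, hb⟩ := hind _ _ h2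
      refine ⟨ha, ?_⟩
      rcases mul_eq_zero.1 hb with h | h
      · exact h
      · exact absurd h (pow_ne_zero _ hπ0F)
    · exact absurd h2 hv0
  have huniq : ∀ a b a' b' : OF F,
      algebraMap F E (↑a : F) * v + algebraMap F E (↑b : F) * w
        = algebraMap F E (↑a' : F) * v + algebraMap F E (↑b' : F) * w →
      a = a' ∧ b = b' := by
    intro a b a' b' h
    have h1 := hvind ((↑a : F) - ↑a') ((↑b : F) - ↑b')
      (by rw [map_sub, map_sub]; linear_combination h)
    exact ⟨Subtype.ext (sub_eq_zero.1 h1.1), Subtype.ext (sub_eq_zero.1 h1.2)⟩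
  obtain ⟨e₁, e₂, he₁L, he₂L, heind, hecoords⟩ := pairBasis hquad L hL.1 hL.2
  -- the inner contradiction lemma
  have inner : ∀ (lam mu : OF F) (z : E), IsUnit mu → z ∈ L →
      algebraMap F E (↑mu : F) * w + algebraMap F E (↑lam : F) * v = p * z → False := by
    intro lam mu z hmu hzL hcomb
    rw [hw_def] at hcomb
    have heq2 : algebraMap F E ((↑(mu*t*π^(k+1) + lam)) : F) * (ω * v)
        = p * (ω * z) - algebraMap F E ((↑(mu*s*π^(k+1))) : F) * v := by
      rw [aM_add, aM_mul, aM_mul, aM_mul, aM_mul, aM_pow, ← hp_def]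
      linear_combination ω * hcomb - algebraMap F E (↑mu : F) * p^(k+1) * v * hst
    have heq3 : algebraMap F E ((↑(mu*t*π^(k+1) + lam)) : F) * ((p ^ k * ω) * v)
        = (p ^ (k+1) * ω) * z - algebraMap F E ((↑(mu*s*π^(k+1)*π^k)) : F) * v := by
      rw [show ((↑(mu*s*π^(k+1)*π^k) : F)) = (↑(mu*s*π^(k+1)) : F) * (↑(π^k) : F) from rfl,
        map_mul, aM_pow, ← hp_def]
      linear_combination p ^ k * heq2
    have hRHS : (p ^ (k+1) * ω) * z
        - algebraMap F E ((↑(mu*s*π^(k+1)*π^k)) : F) * v ∈ L :=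
      L.sub_mem (hmem_multL z hzL) (mulOF_mem _ hvL)
    rw [← heq3] at hRHS
    by_cases hccu : IsUnit (mu*t*π^(k+1) + lam)
    · exact hv (unit_mul_mem hccu hRHS)
    · obtain ⟨q, hq⟩ := dvd_of_not_unit hπ hccu
      have hlam : lam = π * (q - mu*t*π^k) := by
        have h1 : lam = (mu*t*π^(k+1) + lam) - mu*t*π^(k+1) := by ring
        rw [h1, hq]; ring
      have h5 : algebraMap F E (↑mu : F) * ((p ^ (k+1) * ω) * v)
          = p * (z - algebraMap F E ((↑(q - mu*t*π^k)) : F) * v) := by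
        rw [hlam, aM_mul, ← hp_def] at hcomb
        linear_combination hcomb
      set γ : OF F := ((hmu.unit⁻¹ : (OF F)ˣ) : OF F) with hγdef
      have hγmu : algebraMap F E (↑γ : F) * algebraMap F E (↑mu : F) = 1 := by
        have h := hmu.unit.inv_mul
        rw [hmu.unit_spec] at h
        have h2 : ((γ * mu : OF F) : F) = 1 := by
          exact_mod_cast congrArg (fun z : OF F => (z : F)) h
        rw [← map_mul, show (↑γ : F) * ↑mu = ((γ * mu : OF F) : F) from rfl, h2, map_one]
      have h6 : (p ^ k * ω) * v = algebraMap F E (↑γ : F)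
          * (z - algebraMap F E ((↑(q - mu*t*π^k)) : F) * v) := by
        have h7 : p * ((p ^ k * ω) * v) = p * (algebraMap F E (↑γ : F)
            * (z - algebraMap F E ((↑(q - mu*t*π^k)) : F) * v)) := by
          linear_combination algebraMap F E (↑γ : F) * h5
            - ((p ^ (k+1) * ω) * v) * hγmu
        exact mul_left_cancel₀ hp0 h7
      refine hv ?_
      rw [h6]
      exact mulOF_mem γ (L.sub_mem hzL (mulOF_mem _ hvL))
  -- determinant argument
  obtain ⟨a₁, a₂, hveq⟩ := hecoords v hvL
  obtain ⟨c₁, c₂, hweq⟩ := hecoords w hwL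
  have hcoords : ∀ x ∈ L, ∃ a b : OF F,
      x = algebraMap F E (↑a : F) * v + algebraMap F E (↑b : F) * w := by
    by_cases hdet : IsUnit (a₁ * c₂ - a₂ * c₁)
    · intro x hx
      obtain ⟨x₁, x₂, hxeq⟩ := hecoords x hx
      set γ : OF F := ((hdet.unit⁻¹ : (OF F)ˣ) : OF F) with hγdef
      have hγd : γ * (a₁ * c₂ - a₂ * c₁) = 1 := by
        have h := hdet.unit.inv_mul
        rwa [hdet.unit_spec] at h
      refine ⟨γ * (c₂*x₁ - c₁*x₂), γ * (a₁*x₂ - a₂*x₁), ?_⟩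
      have hco1 : γ * (c₂*x₁ - c₁*x₂) * a₁ + γ * (a₁*x₂ - a₂*x₁) * c₁ = x₁ := by
        have h1 : γ * (c₂*x₁ - c₁*x₂) * a₁ + γ * (a₁*x₂ - a₂*x₁) * c₁
            = (γ * (a₁ * c₂ - a₂ * c₁)) * x₁ := by ring
        rw [h1, hγd, one_mul]
      have hco2 : γ * (c₂*x₁ - c₁*x₂) * a₂ + γ * (a₁*x₂ - a₂*x₁) * c₂ = x₂ := by
        have h1 : γ * (c₂*x₁ - c₁*x₂) * a₂ + γ * (a₁*x₂ - a₂*x₁) * c₂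
            = (γ * (a₁ * c₂ - a₂ * c₁)) * x₂ := by ring
        rw [h1, hγd, one_mul]
      have f1 := congrArg (fun z : OF F => algebraMap F E ((z : F))) hco1
      have f2 := congrArg (fun z : OF F => algebraMap F E ((z : F))) hco2
      simp only [aM_add, aM_mul, aM_sub] at f1 f2
      rw [hxeq, hveq, hweq]
      simp only [aM_mul, aM_sub]
      linear_combination (-e₁) * f1 - e₂ * f2
    · exfalso
      obtain ⟨d0, hd0⟩ := dvd_of_not_unit hπ hdet
      by_cases hva : π ∣ a₁ ∧ π ∣ a₂
      · obtain ⟨⟨a₁', ha₁'⟩, ⟨a₂', ha₂'⟩⟩ := hva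
        refine hv ?_
        have h1 : (p ^ k * ω) * v = (p ^ (k+1) * ω)
            * (algebraMap F E (↑a₁' : F) * e₁ + algebraMap F E (↑a₂' : F) * e₂) := by
          rw [hveq, ha₁', ha₂', aM_mul, aM_mul, hp_def]
          ring
        rw [h1]
        exact hmem_multL _ (L.add_mem (mulOF_mem a₁' he₁L) (mulOF_mem a₂' he₂L))
      · have f3 := congrArg (fun z : OF F => algebraMap F E ((z : F))) hd0
        simp only [aM_sub, aM_mul] at f3
        by_cases ha₁ : π ∣ a₁
        · have ha₂u : IsUnit a₂ := by
            by_contra hcon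
            exact hva ⟨ha₁, dvd_of_not_unit hπ hcon⟩
          refine inner c₂ (-a₂) (algebraMap F E (↑d0 : F) * e₁) ha₂u.neg
            (mulOF_mem d0 he₁L) ?_
          rw [show ((↑(-a₂) : F)) = -(↑a₂ : F) from rfl, map_neg, hp_def]
          linear_combination (-(algebraMap F E (↑a₂ : F))) * hweq
            + algebraMap F E (↑c₂ : F) * hveq + e₁ * f3
        · have ha₁u : IsUnit a₁ := by
            by_contra hcon
            exact ha₁ (dvd_of_not_unit hπ hcon)
          refine inner c₁ (-a₁) (algebraMap F E ((↑(-d0)) : F) * e₂) ha₁u.neg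
            (mulOF_mem (-d0) he₂L) ?_
          rw [show ((↑(-a₁) : F)) = -(↑a₁ : F) from rfl,
            show ((↑(-d0) : F)) = -(↑d0 : F) from rfl, map_neg, map_neg, hp_def]
          linear_combination (-(algebraMap F E (↑a₁ : F))) * hweq
            + algebraMap F E (↑c₁ : F) * hveq - e₂ * f3
  -- the lattice L₀
  set L₀ : Submodule (OF F) E := Submodule.span (OF F) {p * v, w} with hL₀def
  have mem_L₀ : ∀ x : E, x ∈ L₀ ↔ ∃ a b : OF F,
      x = algebraMap F E (↑a : F) * (p * v) + algebraMap F E (↑b : F) * w := by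
    intro x
    rw [hL₀def, Submodule.mem_span_pair]
    constructor
    · rintro ⟨a, b, rfl⟩
      exact ⟨a, b, by rw [smulOF, smulOF]⟩
    · rintro ⟨a, b, rfl⟩
      exact ⟨a, b, by rw [smulOF, smulOF]⟩
  have hpvL : p * v ∈ L := by
    rw [show p * v = (π : OF F) • v from (smulOF π v).symm]
    exact L.smul_mem π hvL
  have hL₀L : L₀ ≤ L := by
    rw [hL₀def, Submodule.span_le]
    intro z hz
    rcases hz with h | h
    · rw [h]; exact hpvL
    · rw [Set.mem_singleton_iff] at h; rw [h]; exact hwL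
  have hplow₀ : ∀ x ∈ L, p * x ∈ L₀ := by
    intro x hx
    obtain ⟨a, b, hab⟩ := hcoords x hx
    refine (mem_L₀ _).2 ⟨a, b * π, ?_⟩
    rw [hab, aM_mul, hp_def]
    ring
  have hwnotpL : w ∉ p • (L : Set E) := by
    intro hmem
    obtain ⟨y, hyL, hy⟩ := Set.mem_smul_set.1 hmem
    rw [smul_eq_mul] at hy
    refine hv ?_
    have h1 : (p ^ k * ω) * v = y := by
      apply mul_left_cancel₀ hp0
      rw [hy, hw_def]
      ring
    rw [h1]
    exact hyL
  have hvnotL₀ : v ∉ L₀ := by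
    intro hvmem
    obtain ⟨a, b, hab⟩ := (mem_L₀ v).1 hvmem
    have h1 : algebraMap F E ((↑(a*π)) : F) * v + algebraMap F E (↑b : F) * w
        = algebraMap F E ((↑(1:OF F)) : F) * v + algebraMap F E ((↑(0:OF F)) : F) * w := by
      rw [aM_mul, aM_one, aM_zero, hp_def] at *
      linear_combination -hab
    obtain ⟨h2, -⟩ := huniq _ _ _ _ h1
    exact hπ.not_isUnit (IsUnit.of_mul_eq_one (a := π) a (by rw [mul_comm]; exact h2))
  have hL₀FG : L₀.FG := by
    rw [hL₀def]
    exact Submodule.fg_span (Set.toFinite _)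
  have hL₀lat : IsLattice F E L₀ := by
    refine ⟨hL₀FG, ?_⟩
    rw [eq_top_iff]
    intro x _
    have h1 : x ∈ Submodule.map (LinearMap.mulLeft F p) (Submodule.span F (L : Set E)) := by
      rw [hL.2]
      refine ⟨p⁻¹ * x, trivial, ?_⟩
      show p * (p⁻¹ * x) = x
      field_simp
    rw [Submodule.map_span] at h1
    have h2 : (LinearMap.mulLeft F p) '' (L : Set E) ⊆ (L₀ : Set E) := by
      rintro z ⟨u, hu, rfl⟩
      exact hplow₀ u hu
    exact Submodule.span_mono h2 h1
    -- p^k ω multiplies L₀ into itself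
  have hmultL₀mem : p ^ k * ω ∈ mult F E L₀ := by
    intro x hx
    obtain ⟨a, b, hab⟩ := (mem_L₀ x).1 hx
    refine (mem_L₀ _).2 ⟨b * s * π^(2*k), a + b*t*π^k, ?_⟩
    rw [hab, hw_def]
    simp only [aM_mul, aM_add, aM_pow]
    rw [← hp_def]
    linear_combination (algebraMap F E (↑b : F) * p^(2*k+1) * v) * hst
  -- classification of lattices between p•L and L
  have hbetween : ∀ N : Submodule (OF F) E, N.FG → (∀ x ∈ L, p * x ∈ N) → N ≤ L →
      ∃ j, k ≤ j ∧ j ≤ k + 2 ∧ mult F E N = ordSet F E π j := by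
    intro N hNFG hNlow hNle
    have hN0 : N ≠ ⊥ := by
      intro h0
      have h1 : p * y₀ ∈ N := hNlow y₀ hy₀L
      rw [h0, Submodule.mem_bot] at h1
      exact (mul_ne_zero hp0 hy₀0) h1
    have hi : p ^ (k+2) * ω ∈ mult F E N := by
      intro x hx
      have h1 : (p^(k+1) * ω) * x ∈ L := hmem_multL x (hNle hx)
      have h2 := hNlow _ h1
      rw [show p * ((p^(k+1)*ω)*x) = (p^(k+2)*ω)*x from by ring] at h2
      exact h2
    obtain ⟨j, hjle, hj⟩ := mult_classify π hπ hωT hT hNFG hN0 hi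
    refine ⟨j, ?_, hjle, hj⟩
    by_contra hjk
    push_neg at hjk
    obtain ⟨k', hk'⟩ : ∃ k', k = k' + 1 := ⟨k - 1, by omega⟩
    have h3 : p ^ k' * ω ∈ mult F E N := by
      rw [hj]; exact (hpio k' j).2 (by omega)
    have h4 : p ^ k * ω ∈ mult F E L := by
      intro x hx
      have h5 := h3 _ (hNlow x hx)
      have h6 : (p^k'*ω) * (p*x) = (p^k*ω)*x := by rw [hk']; ring
      exact hNle (h6 ▸ h5)
    exact hnot_multL h4
  -- the dichotomy: any in-between lattice whose multiplier contains p^(k+1)ω is L₀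
  have hdich : ∀ N : Submodule (OF F) E, (∀ x ∈ L, p * x ∈ N) → N ≤ L →
      (∃ x₀ ∈ N, x₀ ∉ p • (L : Set E)) → ¬ L ≤ N →
      p ^ (k+1) * ω ∈ mult F E N → N = L₀ := by
    intro N hNlow hNle hexx hnLN hmul
    have step1 : ∀ x ∈ N, ∀ a b : OF F,
        x = algebraMap F E (↑a : F) * v + algebraMap F E (↑b : F) * w → π ∣ a := by
      intro x hxN a b hxeq
      by_contra hdvd
      have hau : IsUnit a := by
        by_contra hcon; exact hdvd (dvd_of_not_unit hπ hcon)
      have h1 : (p^(k+1)*ω) * x ∈ N := hmul x hxN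
      have h2 : (p^(k+1)*ω)*x = algebraMap F E ((↑(b*s*π^(2*k+1))) : F) * (p*v)
          + algebraMap F E ((↑(a + b*t*π^(k+1))) : F) * w := by
        rw [hxeq, hw_def]
        simp only [aM_mul, aM_add, aM_pow]
        rw [← hp_def]
        linear_combination (algebraMap F E (↑b : F) * p^(2*k+2) * v) * hst
      rw [h2] at h1
      have h4 : algebraMap F E ((↑(b*s*π^(2*k+1))) : F) * (p*v) ∈ N :=
        mulOF_mem _ (hNlow v hvL)
      have h3 : algebraMap F E ((↑(a + b*t*π^(k+1))) : F) * w ∈ N := by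
        have h5 := N.sub_mem h1 h4
        rwa [add_sub_cancel_left] at h5
      have hcu : IsUnit (a + b*t*π^(k+1)) := by
        by_contra hcon
        obtain ⟨q, hq⟩ := dvd_of_not_unit hπ hcon
        refine hdvd ⟨q - b*t*π^k, ?_⟩
        have h6 : a = π*q - b*t*π^(k+1) := by rw [← hq]; ring
        rw [h6]; ring
      have hwN : w ∈ N := unit_mul_mem hcu h3
      have haN : algebraMap F E (↑a : F) * v ∈ N := by
        have h6 := N.sub_mem hxN (mulOF_mem b hwN)
        rwa [hxeq, add_sub_cancel_right] at h6
      have hvN : v ∈ N := unit_mul_mem hau haN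
      apply hnLN
      intro x' hx'
      obtain ⟨a', b', hab'⟩ := hcoords x' hx'
      rw [hab']
      exact N.add_mem (mulOF_mem a' hvN) (mulOF_mem b' hwN)
    obtain ⟨x₀, hx₀N, hx₀notpL⟩ := hexx
    obtain ⟨a₀, b₀, hx₀eq⟩ := hcoords x₀ (hNle hx₀N)
    obtain ⟨a₀', ha₀'⟩ := step1 x₀ hx₀N a₀ b₀ hx₀eq
    have hb₀u : IsUnit b₀ := by
      by_contra hcon
      obtain ⟨b₀', hb₀'⟩ := dvd_of_not_unit hπ hcon
      apply hx₀notpL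
      refine Set.mem_smul_set.2 ⟨algebraMap F E (↑a₀' : F) * v + algebraMap F E (↑b₀' : F) * w,
        L.add_mem (mulOF_mem a₀' hvL) (mulOF_mem b₀' hwL), ?_⟩
      rw [smul_eq_mul, hx₀eq, ha₀', hb₀']
      simp only [aM_mul]
      rw [← hp_def]
      ring
    have hwN : w ∈ N := by
      apply unit_mul_mem hb₀u
      have h7 := N.sub_mem hx₀N (mulOF_mem a₀' (hNlow v hvL))
      have heq : x₀ - algebraMap F E (↑a₀' : F) * (p * v) = algebraMap F E (↑b₀ : F) * w := by
        rw [hx₀eq, ha₀']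
        simp only [aM_mul]
        rw [← hp_def]
        ring
      rwa [heq] at h7
    apply le_antisymm
    · intro x hxN
      obtain ⟨a, b, hxeq⟩ := hcoords x (hNle hxN)
      obtain ⟨a', ha'⟩ := step1 x hxN a b hxeq
      refine (mem_L₀ x).2 ⟨a', b, ?_⟩
      rw [hxeq, ha']
      simp only [aM_mul]
      rw [← hp_def]
      ring
    · rw [hL₀def, Submodule.span_le]
      intro z hz
      rcases hz with h | h
      · rw [h]; exact hNlow v hvL
      · rw [Set.mem_singleton_iff] at h; rw [h]; exact hwN
  -- mult L₀ = ordSet k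
  have hL₀0 : L₀ ≠ ⊥ := by
    intro h0
    have h1 : w ∈ L₀ := by
      rw [hL₀def]
      exact Submodule.subset_span (by simp)
    rw [h0, Submodule.mem_bot] at h1
    exact hw0 h1
  have hmultL₀ : mult F E L₀ = ordSet F E π k := by
    obtain ⟨j, hjk, hjk2, hj⟩ := hbetween L₀ hL₀FG hplow₀ hL₀L
    obtain ⟨j', hj'le, hj'⟩ := mult_classify π hπ hωT hT hL₀FG hL₀0 hmultL₀mem
    have hjj' : j = j' := hordinj (hj.symm.trans hj')
    have hjk3 : j = k := by omega
    rw [hjk3] at hj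
    exact hj
  have hord_ne : ordSet F E π k ≠ ordSet F E π (k+1) := fun h => by
    have := hordinj h
    omega
  constructor
  · -- part 1
    intro L' hL'lat hadj m' hm'
    obtain ⟨N, hNFG, hhomN, hNlow, hNle, hexx, hnLN⟩ := exists_between hadj hL'lat.1
    have hmultN : mult F E N = mult F E L' := homothetic_mult_eq hhomN
    obtain ⟨j, hjk, hjk2, hj⟩ := hbetween N hNFG hNlow hNle
    have hm'j : m' = j := hordinj (by rw [← hm', ← hmultN, hj])
    have hjne : j ≠ k + 1 := by
      intro hjeq
      have h1 : p^(k+1)*ω ∈ mult F E N := by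
        rw [hj, hjeq]
        exact (hpio (k+1) (k+1)).2 le_rfl
      have h2 := hdich N hNlow hNle hexx hnLN h1
      rw [h2, hmultL₀] at hj
      have := hordinj hj
      omega
    omega
  · -- part 2
    refine ⟨L₀, hL₀lat, ⟨?_, L, L₀, homothetic_refl L, homothetic_refl L₀, ?_, ?_⟩, ?_, ?_⟩
    · -- not homothetic
      intro hhom
      have h1 := homothetic_mult_eq hhom
      rw [hmultL₀, hLm] at h1
      exact hord_ne h1
    · -- p • L ⊂ L₀
      constructor
      · intro x hx
        obtain ⟨y, hyL, rfl⟩ := Set.mem_smul_set.1 hx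
        have h1 : p * y ∈ L₀ := hplow₀ y hyL
        rw [show (algebraMap F E (↑π : F)) • y = p * y from by rw [smul_eq_mul, hp_def]]
        exact h1
      · intro hcon
        have hwL₀ : w ∈ L₀ := by
          rw [hL₀def]
          exact Submodule.subset_span (by simp)
        exact hwnotpL (hcon hwL₀)
    · -- L₀ ⊂ L
      constructor
      · intro x hx
        exact hL₀L hx
      · intro hcon
        exact hvnotL₀ (hcon hvL)
    · -- mult L₀ = ordSet (m-1)
      simpa using hmultL₀
    · -- uniqueness
      intro L'' hL''lat hadj'' hmult''
      obtain ⟨N, hNFG, hhomN, hNlow, hNle, hexx, hnLN⟩ := exists_between hadj'' hL''lat.1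
      have hmultN : mult F E N = mult F E L'' := homothetic_mult_eq hhomN
      have h1 : p^(k+1)*ω ∈ mult F E N := by
        rw [hmultN, hmult'']
        exact (hpio (k+1) (k+1-1)).2 (by omega)
      have h2 := hdich N hNlow hNle hexx hnLN h1
      exact homothetic_symm (h2 ▸ hhomN)
end
end

section
/- Let X be a compact topological space and N an abelian group. The natural map LocallyConstant(X, ℤ) ⊗_ℤ N → LocallyConstant(X, N), sending f ⊗ n to the function x ↦ f(x)·n, is an isomorphism of abelian groups. -/
/-!
`X` is a compact topological space and `N` an abelian group. `LocallyConstant X M` is the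
abelian group of locally constant functions `X → M`. The natural map
`LocallyConstant X ℤ ⊗_ℤ N → LocallyConstant X N` sends `f ⊗ n` to `x ↦ f(x)·n`.
-/

open scoped TensorProduct

variable (X : Type*) [TopologicalSpace X] (N : Type*) [AddCommGroup N]

/-- The bilinear map `(f, n) ↦ (x ↦ f(x)·n)`. -/
noncomputable def smulLC : LocallyConstant X ℤ →ₗ[ℤ] N →ₗ[ℤ] LocallyConstant X N where
  toFun f :=
    { toFun := fun n => f.map fun k => k • n
      map_add' := fun n m => by
        ext x
        simp only [LocallyConstant.map_apply, Function.comp_apply, smul_add,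
          LocallyConstant.coe_add, Pi.add_apply]
      map_smul' := fun k n => by
        ext x
        simp only [LocallyConstant.map_apply, Function.comp_apply, RingHom.id_apply,
          LocallyConstant.coe_smul, Pi.smul_apply]
        exact smul_comm _ _ _ }
  map_add' f g := by
    ext n x
    simp only [LocallyConstant.map_apply, Function.comp_apply, LocallyConstant.coe_add,
      Pi.add_apply, add_smul, LinearMap.coe_mk, AddHom.coe_mk, LinearMap.add_apply]
  map_smul' k f := by
    ext n x
    simp only [LocallyConstant.map_apply, Function.comp_apply, RingHom.id_apply,
      LocallyConstant.coe_smul, Pi.smul_apply, LinearMap.coe_mk, AddHom.coe_mk,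
      LinearMap.smul_apply, smul_assoc]


private lemma pi_isLocallyConstant {X : Type*} [TopologicalSpace X] {ι Y : Type*} [Finite ι]
    {f : ι → X → Y} (hf : ∀ i, IsLocallyConstant (f i)) :
    IsLocallyConstant (fun x i => f i x) := by
  rw [IsLocallyConstant.iff_exists_open]
  intro x
  choose U hUo hxU hU using fun i => (hf i).exists_open x
  refine ⟨⋂ i, U i, isOpen_iInter_of_finite hUo, Set.mem_iInter.2 hxU, fun y hy => ?_⟩
  exact funext fun i => hU i y (Set.mem_iInter.1 hy i)

/-- For `X` compact and `N` an abelian group, the natural map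
`LocallyConstant(X, ℤ) ⊗_ℤ N → LocallyConstant(X, N)`, `f ⊗ n ↦ (x ↦ f(x)·n)`, is an
isomorphism of abelian groups. -/
theorem locallyConstant_tensor_iso [CompactSpace X] :
    Function.Bijective (TensorProduct.lift (smulLC X N)) ∧
    ∀ (f : LocallyConstant X ℤ) (n : N) (x : X),
      TensorProduct.lift (smulLC X N) (f ⊗ₜ[ℤ] n) x = f x • n := by
  have key : ∀ (f : LocallyConstant X ℤ) (n : N) (x : X),
      TensorProduct.lift (smulLC X N) (f ⊗ₜ[ℤ] n) x = f x • n := fun f n x => by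
    simp [smulLC]
  refine ⟨⟨?_, ?_⟩, key⟩
  · rw [injective_iff_map_eq_zero]
    intro t ht
    obtain ⟨s, rfl⟩ := TensorProduct.exists_finset t
    set g : LocallyConstant X (s → ℤ) :=
      ⟨fun x q => q.1.1 x, pi_isLocallyConstant fun q => q.1.1.isLocallyConstant⟩ with hg
    have hR := g.range_finite
    set R : Finset (s → ℤ) := hR.toFinset with hRdef
    set χ : (s → ℤ) → LocallyConstant X ℤ :=
      fun v => LocallyConstant.charFn ℤ (g.isLocallyConstant.isClopen_fiber v) with hχ
    have hχ1 : ∀ v (x : X), g x = v → χ v x = 1 := fun v x h =>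
      (LocallyConstant.charFn_eq_one ℤ x _).2 h
    have hχ0 : ∀ v (x : X), g x ≠ v → χ v x = 0 := fun v x h =>
      (LocallyConstant.charFn_eq_zero ℤ x _).2 h
    have hgR : ∀ x : X, g x ∈ R := fun x => hR.mem_toFinset.2 (Set.mem_range_self x)
    have claimA : ∀ q : {p // p ∈ s}, (q.1.1 : LocallyConstant X ℤ) = ∑ v ∈ R, v q • χ v := by
      intro q
      ext x
      have h1 : (∑ v ∈ R, v q • χ v) x = ∑ v ∈ R, v q • χ v x := by
        exact map_sum (LocallyConstant.evalₗ ℤ x) (fun v => v q • χ v) R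
      rw [h1, Finset.sum_eq_single (g x)]
      · rw [hχ1 (g x) x rfl]
        simp [hg]
      · intro b _ hb
        rw [hχ0 b x (Ne.symm hb), smul_zero]
      · exact fun h => absurd (hgR x) h
    set m : ({p // p ∈ s} → ℤ) → N := fun v => ∑ q ∈ s.attach, v q • q.1.2 with hm
    have claimB : ∑ p ∈ s, p.1 ⊗ₜ[ℤ] p.2 = ∑ v ∈ R, χ v ⊗ₜ[ℤ] m v := by
      rw [← Finset.sum_attach s (fun p => p.1 ⊗ₜ[ℤ] p.2)]
      calc ∑ q ∈ s.attach, q.1.1 ⊗ₜ[ℤ] q.1.2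
          = ∑ q ∈ s.attach, (∑ v ∈ R, v q • χ v) ⊗ₜ[ℤ] q.1.2 :=
            Finset.sum_congr rfl fun q _ => by rw [← claimA q]
        _ = ∑ q ∈ s.attach, ∑ v ∈ R, (v q • χ v) ⊗ₜ[ℤ] q.1.2 := by
            simp_rw [TensorProduct.sum_tmul]
        _ = ∑ v ∈ R, ∑ q ∈ s.attach, χ v ⊗ₜ[ℤ] (v q • q.1.2) := by
            rw [Finset.sum_comm]
            simp_rw [TensorProduct.smul_tmul]
        _ = ∑ v ∈ R, χ v ⊗ₜ[ℤ] m v := by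
            simp_rw [← TensorProduct.tmul_sum]
            rfl
    have claimC : ∀ v ∈ R, m v = 0 := by
      intro v hv
      obtain ⟨x, hx⟩ := hR.mem_toFinset.1 hv
      have h0 : TensorProduct.lift (smulLC X N) (∑ p ∈ s, p.1 ⊗ₜ[ℤ] p.2) x = 0 := by
        rw [ht]; rfl
      rw [claimB, map_sum] at h0
      have h1 : ∑ v' ∈ R, χ v' x • m v' = 0 := by
        rw [← h0]
        rw [show ((∑ v' ∈ R, TensorProduct.lift (smulLC X N) (χ v' ⊗ₜ[ℤ] m v')) x)
            = ∑ v' ∈ R, (TensorProduct.lift (smulLC X N) (χ v' ⊗ₜ[ℤ] m v')) x from by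
          exact map_sum (LocallyConstant.evalₗ ℤ x)
            (fun v' => TensorProduct.lift (smulLC X N) (χ v' ⊗ₜ[ℤ] m v')) R]
        exact Finset.sum_congr rfl fun v' _ => (key _ _ _).symm
      rw [Finset.sum_eq_single v] at h1
      · rwa [hχ1 v x hx, one_smul] at h1
      · intro b _ hb
        rw [hχ0 b x (hx ▸ Ne.symm hb), zero_smul]
      · exact fun h => absurd hv h
    rw [claimB]
    exact Finset.sum_eq_zero fun v hv => by rw [claimC v hv, TensorProduct.tmul_zero]
  · intro h
    have hR := h.range_finite
    refine ⟨∑ v ∈ hR.toFinset,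
      LocallyConstant.charFn ℤ (h.isLocallyConstant.isClopen_fiber v) ⊗ₜ[ℤ] v, ?_⟩
    ext x
    rw [map_sum]
    rw [show ((∑ v ∈ hR.toFinset, TensorProduct.lift (smulLC X N)
          (LocallyConstant.charFn ℤ (h.isLocallyConstant.isClopen_fiber v) ⊗ₜ[ℤ] v)) x)
        = ∑ v ∈ hR.toFinset, (TensorProduct.lift (smulLC X N)
          (LocallyConstant.charFn ℤ (h.isLocallyConstant.isClopen_fiber v) ⊗ₜ[ℤ] v)) x from by
      exact map_sum (LocallyConstant.evalₗ ℤ x) _ hR.toFinset]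
    rw [Finset.sum_eq_single (h x)]
    · have e1 : (LocallyConstant.charFn ℤ (h.isLocallyConstant.isClopen_fiber (h x))) x = 1 :=
        (LocallyConstant.charFn_eq_one ℤ x (h.isLocallyConstant.isClopen_fiber (h x))).2 rfl
      rw [key, e1, one_smul]
    · intro b _ hb
      have e0 : (LocallyConstant.charFn ℤ (h.isLocallyConstant.isClopen_fiber b)) x = 0 :=
        (LocallyConstant.charFn_eq_zero ℤ x (h.isLocallyConstant.isClopen_fiber b)).2
          (fun hc => hb hc.symm)
      rw [key, e0, zero_smul]
    · exact fun hc => absurd (hR.mem_toFinset.2 (Set.mem_range_self x)) hc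
end
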